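/- In the bottom-up propagation of a point p in a local net-tree with parameters (τ, c_p, c_c) and c_r ≥ 2c_c·τ/(τ−2): if at iteration i−1 the node p^(ℓ+i−1) has parent q^(ℓ+i) with d(p, q) ≤ (c_c + c_r/τ)·τ^(ℓ+i), and every node x^m ≠ p^(ℓ+i−1) satisfies d(x, parent(x^m)) ≤ c_c·τ^(m+1), then the new parent of p^(ℓ+i) chosen as the closest node among relatives of parent(q^(ℓ+i)) satisfies d(p^(ℓ+i), parent(p^(ℓ+i))) ≤ (c_r/τ² + c_c/τ + c_c)·τ^(ℓ+i+1) < (c_c + c_r/τ)·τ^(ℓ+i+1) < c_r·τ^(ℓ+i+1). -/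

import Mathlib

/-- Bottom-up propagation distance bound.  At iteration `i` (level `m = ℓ + i`), if
`d(p,q) ≤ (c_c + c_r/τ)·τ^m` for the old parent-point `q` of `p`, `q`'s parent `q'`
satisfies the covering bound `d(q,q') ≤ c_c·τ^(m+1)`, and the new parent `s` of
`p^(m)`'s promotion is at least as close to `p` as `q'`, then
`d(p,s) ≤ (c_r/τ² + c_c/τ + c_c)·τ^(m+1) < (c_c + c_r/τ)·τ^(m+1) < c_r·τ^(m+1)`
(for `c_r ≥ 2c_c·τ/(τ-2)` and `τ > 2`). -/
theorem bottom_up_propagation_bound {M : Type*} [MetricSpace M]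
    (τ c_c c_r : ℝ) (hτ : 2 < τ) (hcc : 0 < c_c)
    (hcr : 2 * c_c * τ / (τ - 2) ≤ c_r)
    (p q q' s : M) (m : ℤ)
    (hpq : dist p q ≤ (c_c + c_r / τ) * τ ^ m)
    (hqq' : dist q q' ≤ c_c * τ ^ (m + 1))
    (hs : dist p s ≤ dist p q') :
    dist p s ≤ (c_r / τ ^ 2 + c_c / τ + c_c) * τ ^ (m + 1) ∧
    (c_r / τ ^ 2 + c_c / τ + c_c) * τ ^ (m + 1) < (c_c + c_r / τ) * τ ^ (m + 1) ∧
    (c_c + c_r / τ) * τ ^ (m + 1) < c_r * τ ^ (m + 1) := by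
  have hτ0 : (0:ℝ) < τ := by linarith
  have htm : (0:ℝ) < τ ^ m := zpow_pos hτ0 m
  have htm2 : (0:ℝ) < τ ^ (m + 1) := zpow_pos hτ0 (m + 1)
  have htm1 : τ ^ (m + 1) = τ ^ m * τ := by
    rw [zpow_add_one₀ (ne_of_gt hτ0)]
  have hcrpos : 0 < c_r := lt_of_lt_of_le (div_pos (by positivity) (by linarith)) hcr
  have hcr' : 2 * c_c * τ ≤ c_r * (τ - 2) := by
    rw [div_le_iff₀ (by linarith)] at hcr; linarith
  have key : c_c * τ < c_r * (τ - 1) := by nlinarith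
  have hsq : (0:ℝ) < τ ^ 2 := by positivity
  have h2 : c_r / τ ^ 2 + c_c / τ + c_c < c_c + c_r / τ := by
    rw [show c_r / τ ^ 2 + c_c / τ + c_c = (c_r + c_c*τ + c_c*τ^2)/τ^2 by
          field_simp,
        show c_c + c_r / τ = (c_c*τ^2 + c_r*τ)/τ^2 by field_simp,
        div_lt_div_iff_of_pos_right hsq]
    nlinarith
  have h3 : c_c + c_r / τ < c_r := by
    rw [show c_c + c_r / τ = (c_c*τ + c_r)/τ by field_simp,
        div_lt_iff₀ hτ0]
    nlinarith
  refine ⟨?_, mul_lt_mul_of_pos_right h2 htm2, mul_lt_mul_of_pos_right h3 htm2⟩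
  have h1 : dist p q' ≤ dist p q + dist q q' := dist_triangle p q q'
  have h4 : dist p s ≤ (c_c + c_r / τ) * τ ^ m + c_c * τ ^ (m+1) := by linarith
  calc dist p s ≤ (c_c + c_r / τ) * τ ^ m + c_c * τ ^ (m+1) := h4
    _ = (c_r / τ ^ 2 + c_c / τ + c_c) * τ ^ (m + 1) := by
        rw [htm1]; field_simp; ring
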